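/- Let Obs be an observation function with Ω ⊨ Obs, and let (σ, b) be a new observation constructed as an interleaving of a local query σ_i over Σ_i with a trace σ' whose projections on all Σ_j (j ≠ i) are positive under Obs, where proj(σ, Σ_i) is not in the domain of Obs_{Σ_i}. Then Ω ⊨ Obs ∪ {(σ, b)}. -/

import Mathlib

open Classical in
/-- Projection of a trace onto a sub-alphabet. -/
noncomputable def proj {A : Type*} (s : Set A) : List A → List A
  | [] => []
  | a :: σ => if a ∈ s then a :: proj s σ else proj s σ

/-- A distribution of the alphabet `A`: a family of sub-alphabets covering `A`. -/
def AlphabetDistribution {A : Type*} (Ω : Set (Set A)) : Prop := ⋃₀ Ω = Set.univ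

/-- A language agrees with an observation function (`L ⊨ Obs`). -/
def Agrees {A : Type*} (L : Set (List A)) (Obs : List A → Option Bool) : Prop :=
  ∀ σ b, Obs σ = some b → (σ ∈ L ↔ b = true)

/-- `L` is a product language over the distribution `Ω`: it is the parallel
composition of a family of languages over the component alphabets. -/
def ProductLang {A : Type*} (Ω : Set (Set A)) (L : Set (List A)) : Prop :=
  ∃ Ls : Set A → Set (List A),
    (∀ s ∈ Ω, ∀ σ ∈ Ls s, ∀ a ∈ σ, a ∈ s) ∧
    L = {σ | ∀ s ∈ Ω, proj s σ ∈ Ls s}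

/-- `Ω ⊨ Obs`: some product language over `Ω` agrees with `Obs`. -/
def Models {A : Type*} (Ω : Set (Set A)) (Obs : List A → Option Bool) : Prop :=
  ∃ L, ProductLang Ω L ∧ Agrees L Obs

/-- A counter-example to `Ω ⊨ Obs`: a negative observation `σN` together with,
for each component alphabet, a positive observation with matching projection. -/
def IsCED {A : Type*} (Ω : Set (Set A)) (Obs : List A → Option Bool)
    (σN : List A) (P : Set A → List A) : Prop :=
  Obs σN = some false ∧
  ∀ s ∈ Ω, Obs (P s) = some true ∧ proj s σN = proj s (P s)

/-- The connectivity preorder: `Ω` is less connecting than `Ω'`. -/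
def lessConn {A : Type*} (Ω Ω' : Set (Set A)) : Prop :=
  ∀ s ∈ Ω, ∃ t ∈ Ω', s ⊆ t

open Classical in
/-- A membership query constructed by the Adapter cannot invalidate the current
distribution: if `Ω ⊨ Obs`, the query trace `σ` is new, its projections on all
components other than `Si` are already known positive, and its projection on `Si`
is not in the domain of the local observations, then `Ω` still models the extended
observation function, whatever the answer `b`. -/
theorem membership_preserves_models {A : Type*} (Ω : Set (Set A))
    (hΩ : AlphabetDistribution Ω) (Obs : List A → Option Bool)
    (hfin : {τ | Obs τ ≠ none}.Finite) (hmod : Models Ω Obs)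
    (Si : Set A) (hSi : Si ∈ Ω) (σ : List A) (b : Bool)
    (hnew : Obs σ = none)
    (hpos : ∀ s ∈ Ω, s ≠ Si → ∃ τ, Obs τ = some true ∧ proj s τ = proj s σ)
    (hloc : ¬ ∃ τ, Obs τ ≠ none ∧ proj Si τ = proj Si σ) :
    Models Ω (fun τ => if τ = σ then some b else Obs τ) := by
  obtain ⟨L, ⟨Ls, hLs1, hLs2⟩, hAg⟩ := hmod
  have hprojmem : ∀ (s : Set A) (τ : List A), ∀ a ∈ proj s τ, a ∈ s := by
    intro s τ
    induction τ with
    | nil => intro a h; simp [proj] at h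
    | cons x xs ih =>
      intro a h
      by_cases hx : x ∈ s
      · simp [proj, hx] at h
        rcases h with h | h
        · exact h ▸ hx
        · exact ih a h
      · simp [proj, hx] at h; exact ih a h
  classical
  set Ls' : Set A → Set (List A) := fun s =>
    if s = Si then (if b then Ls Si ∪ {proj Si σ} else Ls Si \ {proj Si σ})
    else Ls s with hLs'
  refine ⟨{τ | ∀ s ∈ Ω, proj s τ ∈ Ls' s}, ⟨Ls', ?_, rfl⟩, ?_⟩
  · intro s hs τ hτ a ha
    by_cases hsi : s = Si
    · subst hsi
      simp only [hLs', if_pos rfl] at hτ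
      cases b with
      | true =>
        simp at hτ
        rcases hτ with hτ | hτ
        · subst hτ; exact hprojmem s σ a ha
        · exact hLs1 s hs τ hτ a ha
      | false =>
        simp at hτ
        exact hLs1 s hs τ hτ.1 a ha
    · simp only [hLs', if_neg hsi] at hτ
      exact hLs1 s hs τ hτ a ha
  · intro τ b' hτ
    simp only at hτ
    by_cases hts : τ = σ
    · subst hts
      simp at hτ
      subst hτ
      constructor
      · intro hmem
        have := hmem Si hSi
        simp only [hLs', if_pos rfl] at this
        cases b with
        | true => rfl
        | false => simp at this
      · intro hb
        subst hb
        intro s hs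
        by_cases hsi : s = Si
        · subst hsi
          simp [hLs']
        · simp only [hLs', if_neg hsi]
          obtain ⟨τ', hτ'1, hτ'2⟩ := hpos s hs hsi
          have hmem : τ' ∈ L := (hAg τ' true hτ'1).mpr rfl
          rw [hLs2] at hmem
          exact hτ'2 ▸ hmem s hs
    · rw [if_neg hts] at hτ
      have hne : proj Si τ ≠ proj Si σ := by
        intro h
        exact hloc ⟨τ, by simp [hτ], h⟩
      have key : (∀ s ∈ Ω, proj s τ ∈ Ls' s) ↔ τ ∈ L := by
        rw [hLs2]
        constructor <;> intro h s hs <;> have hh := h s hs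
        · by_cases hsi : s = Si
          · subst hsi
            simp only [hLs', if_pos rfl] at hh
            cases b with
            | true =>
              simp at hh
              rcases hh with hh | hh
              · exact absurd hh hne
              · exact hh
            | false => exact hh.1
          · simpa only [hLs', if_neg hsi] using hh
        · by_cases hsi : s = Si
          · subst hsi
            simp only [hLs', if_pos rfl]
            cases b with
            | true => simp; right; exact hh
            | false => exact ⟨hh, hne⟩
          · simpa only [hLs', if_neg hsi] using hh
      rw [Set.mem_setOf_eq, key]
      exact hAg τ b' hτ
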